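/- Let W be the cubic surface X1^2 X3 = X0^3 + b X0 X3^2 + (c X2^2 + d X2 X3 + e X3^2) X3 with c ≠ 0 (the case a = 0). Under the substitution (X0,X1,X2,X3) ↦ (X2, (1/2)(−X0 + (d/(2√c))X1 + X3), (1/(2√c))(X0 − (d/(2√c))X1 + X3), X1), the defining polynomial becomes X0 X1 X3 + G(X0,X1,X2) with G(X0,X1,X2) = (d/(2√c)) X0 X1^2 + ((4ce − d^2)/(4c)) X1^3 + b X1^2 X2 + X2^3, and in particular G(0,0,1) = 1 ≠ 0. -/

import Mathlib

open MvPolynomial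

/-- for the cubic surface `W : X1² X3 = X0³ + b X0 X3² +
(c X2² + d X2 X3 + e X3²) X3` with `c ≠ 0` (the case `a = 0`), under the substitution
`(X0,X1,X2,X3) ↦ (X2, (1/2)(−X0 + (d/(2√c))X1 + X3), (1/(2√c))(X0 − (d/(2√c))X1 + X3), X1)`
the defining polynomial becomes `X0 X1 X3 + G(X0,X1,X2)` with
`G = (d/(2√c)) X0 X1² + ((4ce − d²)/(4c)) X1³ + b X1² X2 + X2³`, and `G(0,0,1) = 1 ≠ 0`. -/
theorem stmt_8 (K : Type*) [Field K] [IsAlgClosed K] [CharZero K]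
    (b c d e s : K) (hc : c ≠ 0) (hs : s ^ 2 = c)
    (F : MvPolynomial (Fin 4) K)
    (hF : F = X 0 ^ 3 + C b * X 0 * X 3 ^ 2
      + (C c * X 2 ^ 2 + C d * X 2 * X 3 + C e * X 3 ^ 2) * X 3 - X 1 ^ 2 * X 3)
    (σ : Fin 4 → MvPolynomial (Fin 4) K)
    (hσ : σ = ![X 2,
        C (2⁻¹ : K) * (-X 0 + C (d / (2 * s)) * X 1 + X 3),
        C (1 / (2 * s)) * (X 0 - C (d / (2 * s)) * X 1 + X 3), X 1])
    (G : MvPolynomial (Fin 4) K)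
    (hG : G = C (d / (2 * s)) * X 0 * X 1 ^ 2 + C ((4 * c * e - d ^ 2) / (4 * c)) * X 1 ^ 3
      + C b * X 1 ^ 2 * X 2 + X 2 ^ 3) :
    aeval σ F = X 0 * X 1 * X 3 + G ∧
      eval (fun i => if i = 2 then (1 : K) else 0) G = 1 ∧ (1 : K) ≠ 0 := by
  have hs0 : s ≠ 0 := fun h => hc (by rw [← hs, h]; ring)
  refine ⟨?_, ?_, one_ne_zero⟩
  · subst hF hσ hG
    apply MvPolynomial.funext
    intro x
    simp only [map_add, map_sub, map_mul, map_pow, map_neg, aeval_X, aeval_C, eval_add,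
      eval_sub, eval_mul, eval_pow, eval_neg, eval_X, eval_C,
      Matrix.cons_val_zero, Matrix.cons_val_one, Matrix.head_cons,
      Matrix.cons_val_two, Matrix.tail_cons, Matrix.cons_val_three,
      Matrix.head_fin_const, algebraMap_eq]
    subst hs
    field_simp
    have h : s⁻¹ ^ 8 * s ^ 8 = 1 := by
      rw [← mul_pow, inv_mul_cancel₀ hs0, one_pow]
    linear_combination
  · subst hG; simp
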